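/- For every n ≥ 1, a function x : S^n → ℝ lies in the Bell cone B_n if and only if the function s ↦ ∑_{t∈S^n} (∏_{j=1}^n F_{s_j t_j}) x^t lies in the dual cone (NS_n)* of the no-signaling cone. -/

import Mathlib

open Finset

noncomputable section

/-- The dual cone of a set of real-valued functions on a finite index set. -/
def dualCone {I : Type*} [Fintype I] (C : Set (I → ℝ)) : Set (I → ℝ) :=
  {g | ∀ x ∈ C, 0 ≤ ∑ i, g i * x i}

/-- The convex cone generated by a set: all finite nonnegative linear combinations. -/
def coneHull {E : Type*} [AddCommMonoid E] [Module ℝ E] (X : Set E) : Set E :=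
  {y | ∃ (m : ℕ) (c : Fin m → ℝ) (v : Fin m → E),
    (∀ i, 0 ≤ c i) ∧ (∀ i, v i ∈ X) ∧ y = ∑ i, c i • v i}

/-- The square cone `Sq ⊆ ℝ^S`, where `S = {-1,0,+1}` is `SignType`. -/
def Sq : Set (SignType → ℝ) :=
  {x | -x 0 ≤ x (-1) ∧ x (-1) ≤ x 0 ∧ -x 0 ≤ x 1 ∧ x 1 ≤ x 0}

/-- `hF v t s = h_v(t,s)`: equals `t` if `v = s`, `1` if `v = 0`, and `0` if `v = -s`. -/
def hF (v t s : SignType) : ℝ := if v = s then (t : ℝ) else if v = 0 then 1 else 0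

/-- The no-signaling cone `NS_n`. -/
def NS (n : ℕ) : Set ((Fin n → SignType) → ℝ) :=
  {x | ∀ s t : Fin n → SignType, (∀ j, s j ≠ 0) → (∀ j, t j ≠ 0) →
    0 ≤ ∑ v : Fin n → SignType, (∏ j, hF (v j) (t j) (s j)) * x v}

/-- Local deterministic strategies: `a j 0 = 1` and `a j (±1) ∈ {-1,+1}`. -/
def IsDet {n : ℕ} (a : Fin n → SignType → ℝ) : Prop :=
  ∀ j, a j 0 = 1 ∧ (a j (-1) = -1 ∨ a j (-1) = 1) ∧ (a j 1 = -1 ∨ a j 1 = 1)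

/-- The Bell cone `B_n`: the convex cone generated by the local deterministic points. -/
def Bell (n : ℕ) : Set ((Fin n → SignType) → ℝ) :=
  coneHull {x | ∃ a : Fin n → SignType → ℝ, IsDet a ∧ x = fun s => ∏ j, a j (s j)}

/-- The tensor `F_{st}` (lowered indices). -/
def Flo (s t : SignType) : ℝ :=
  if s = 0 then (if t = 0 then 1 else 0)
  else if t = 0 then 0
  else if s = 1 ∧ t = 1 then -(1/2) else 1/2

/-- The tensor `F^{st}` (raised indices). -/
def Fup (s t : SignType) : ℝ :=
  if s = 0 then (if t = 0 then 1 else 0)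
  else if t = 0 then 0
  else if s = 1 ∧ t = 1 then -1 else 1

/-! ### Generalities about `coneHull` -/

section ConeHull
variable {E : Type*} [AddCommGroup E] [Module ℝ E] {X : Set E}

lemma smul_mem_coneHull' {c : ℝ} (hc : 0 ≤ c) {x : E} (hx : x ∈ X) : c • x ∈ coneHull X :=
  ⟨1, fun _ => c, fun _ => x, fun _ => hc, fun _ => hx, by simp⟩

lemma subset_coneHull : X ⊆ coneHull X := fun x hx => by
  simpa using smul_mem_coneHull' zero_le_one hx

lemma zero_mem_coneHull : (0 : E) ∈ coneHull X :=
  ⟨0, fun i => 0, fun i => i.elim0, fun i => le_rfl, fun i => i.elim0, by simp⟩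

lemma add_mem_coneHull {x y : E} (hx : x ∈ coneHull X) (hy : y ∈ coneHull X) :
    x + y ∈ coneHull X := by
  obtain ⟨m, c, v, hc, hv, rfl⟩ := hx
  obtain ⟨k, d, w, hd, hw, rfl⟩ := hy
  refine ⟨m + k, Fin.append c d, Fin.append v w, ?_, ?_, ?_⟩
  · intro i
    refine Fin.addCases (fun j => ?_) (fun j => ?_) i
    · rw [Fin.append_left]; exact hc j
    · rw [Fin.append_right]; exact hd j
  · intro i
    refine Fin.addCases (fun j => ?_) (fun j => ?_) i
    · rw [Fin.append_left]; exact hv j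
    · rw [Fin.append_right]; exact hw j
  · rw [Fin.sum_univ_add]
    simp [Fin.append_left, Fin.append_right]

lemma smul_mem_coneHull {c : ℝ} (hc : 0 ≤ c) {x : E} (hx : x ∈ coneHull X) :
    c • x ∈ coneHull X := by
  obtain ⟨m, d, v, hd, hv, rfl⟩ := hx
  refine ⟨m, fun i => c * d i, v, fun i => mul_nonneg hc (hd i), hv, ?_⟩
  rw [Finset.smul_sum]
  simp [smul_smul]

lemma convex_coneHull : Convex ℝ (coneHull X) := by
  intro x hx y hy a b ha hb _
  exact add_mem_coneHull (smul_mem_coneHull ha hx) (smul_mem_coneHull hb hy)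

lemma coneHull_eq_smul_convexHull (hX : X.Nonempty) :
    coneHull X = {y | ∃ r : ℝ, 0 ≤ r ∧ ∃ z ∈ convexHull ℝ X, y = r • z} := by
  ext y
  constructor
  · rintro ⟨m, c, v, hc, hv, rfl⟩
    set r := ∑ i, c i with hr
    rcases eq_or_lt_of_le (Finset.sum_nonneg (fun i _ => hc i)) with h0 | h0
    · obtain ⟨z, hz⟩ := hX
      refine ⟨0, le_rfl, z, subset_convexHull ℝ X hz, ?_⟩
      have : ∀ i ∈ Finset.univ, c i = 0 :=
        (Finset.sum_eq_zero_iff_of_nonneg (fun i _ => hc i)).1 h0.symm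
      rw [Finset.sum_eq_zero (fun i hi => by rw [this i hi, zero_smul]), zero_smul]
    · refine ⟨r, le_of_lt h0, ∑ i, (c i / r) • v i, ?_, ?_⟩
      · refine (convex_convexHull ℝ X).sum_mem (fun i _ => div_nonneg (hc i) h0.le) ?_
          (fun i _ => subset_convexHull ℝ X (hv i))
        rw [← Finset.sum_div, ← hr, div_self h0.ne']
      · rw [Finset.smul_sum]
        refine Finset.sum_congr rfl (fun i _ => ?_)
        rw [smul_smul, mul_div_cancel₀ _ h0.ne']
  · rintro ⟨r, hr, z, hz, rfl⟩
    have hsub : convexHull ℝ X ⊆ coneHull X :=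
      convexHull_min subset_coneHull convex_coneHull
    exact smul_mem_coneHull hr (hsub hz)

end ConeHull

section Closed

open Filter

variable {ι : Type*} [Fintype ι]

lemma isClosed_coneHull_of_finite (X : Set (ι → ℝ)) (hfin : X.Finite) (hne : X.Nonempty)
    (i₀ : ι) (h1 : ∀ g ∈ X, g i₀ = 1) : IsClosed (coneHull X) := by
  rw [coneHull_eq_smul_convexHull hne]
  have hhyp : convexHull ℝ X ⊆ {z : ι → ℝ | z i₀ = 1} := by
    refine convexHull_min h1 ?_
    intro p hp q hq a b ha hb hab
    simp only [Set.mem_setOf_eq] at hp hq ⊢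
    simp [Pi.add_apply, Pi.smul_apply, hp, hq, smul_eq_mul]
    linarith
  apply IsSeqClosed.isClosed
  intro u w hu hlim
  choose r hr z hz he using hu
  have hcpt : IsCompact (convexHull ℝ X) := hfin.isCompact_convexHull ℝ
  obtain ⟨zl, hzl, φ, hφ, hzlim⟩ := hcpt.tendsto_subseq hz
  have hulim : Tendsto (fun k => u (φ k)) atTop (nhds w) := hlim.comp hφ.tendsto_atTop
  have hr_eq : ∀ k, u k i₀ = r k := by
    intro k
    have h2 : z k i₀ = 1 := hhyp (hz k)
    rw [he k]
    simp [Pi.smul_apply, h2]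
  have hrlim : Tendsto (fun k => r (φ k)) atTop (nhds (w i₀)) := by
    have := tendsto_pi_nhds.1 hulim i₀
    simpa [hr_eq] using this
  have hprod : Tendsto (fun k => r (φ k) • z (φ k)) atTop (nhds (w i₀ • zl)) :=
    hrlim.smul hzlim
  have heq : (fun k => r (φ k) • z (φ k)) = fun k => u (φ k) := by
    funext k; rw [he (φ k)]
  rw [heq] at hprod
  have hw : w = w i₀ • zl := tendsto_nhds_unique hulim hprod
  refine ⟨w i₀, ?_, zl, hzl, hw⟩
  exact ge_of_tendsto' hrlim (fun k => hr (φ k))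

lemma farkas [DecidableEq ι] (X : Set (ι → ℝ)) (hfin : X.Finite)
    (hne : X.Nonempty) (i₀ : ι) (h1 : ∀ g ∈ X, g i₀ = 1) (y : ι → ℝ)
    (hy : ∀ x : ι → ℝ, (∀ g ∈ X, 0 ≤ ∑ i, g i * x i) → 0 ≤ ∑ i, y i * x i) :
    y ∈ coneHull X := by
  by_contra hnot
  obtain ⟨f, u, hfu, huy⟩ := geometric_hahn_banach_closed_point
    (convex_coneHull (X := X)) (isClosed_coneHull_of_finite X hfin hne i₀ h1) hnot
  have hu0 : 0 < u := by simpa using hfu 0 zero_mem_coneHull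
  have hfa : ∀ a ∈ coneHull X, f a ≤ 0 := by
    intro a ha
    by_contra hpos
    push_neg at hpos
    have h2 : f ((u / f a) • a) < u := hfu _ (smul_mem_coneHull (by positivity) ha)
    rw [map_smul, smul_eq_mul, div_mul_cancel₀ _ hpos.ne'] at h2
    exact lt_irrefl _ h2
  set x : ι → ℝ := fun i => -(f (fun j => if i = j then 1 else 0)) with hx
  have hfrep : ∀ a : ι → ℝ, f a = -∑ i, a i * x i := by
    intro a
    have := LinearMap.pi_apply_eq_sum_univ (f.toLinearMap) a
    simp only [ContinuousLinearMap.coe_coe] at this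
    rw [this, ← Finset.sum_neg_distrib]
    refine Finset.sum_congr rfl (fun i _ => ?_)
    simp only [hx, smul_eq_mul]
    ring
  have hxNS : ∀ g ∈ X, 0 ≤ ∑ i, g i * x i := by
    intro g hg
    have := hfa g (subset_coneHull hg)
    rw [hfrep g] at this
    linarith
  have := hy x hxNS
  have h3 : f y > 0 := lt_trans hu0 huy
  rw [hfrep y] at h3
  linarith

end Closed

/-! ### SignType computations -/

lemma signType_sum (f : SignType → ℝ) : ∑ u, f u = f 0 + f (-1) + f 1 := by
  show f SignType.zero + (f SignType.neg + (f SignType.pos + 0)) = _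
  ring_nf
  rfl

/-- The setting `s` associated to a deterministic one-site strategy. -/
def sOf (a : SignType → ℝ) : SignType := if a (-1) = a 1 then -1 else 1

/-- The outcome sign `t` associated to a deterministic one-site strategy. -/
def tOf (a : SignType → ℝ) : SignType := if a (-1) = 1 then 1 else -1

lemma sOf_ne_zero (a : SignType → ℝ) : sOf a ≠ 0 := by unfold sOf; split <;> decide
lemma tOf_ne_zero (a : SignType → ℝ) : tOf a ≠ 0 := by unfold tOf; split <;> decide

lemma site_key (a : SignType → ℝ) (h0 : a 0 = 1) (h1 : a (-1) = -1 ∨ a (-1) = 1)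
    (h2 : a 1 = -1 ∨ a 1 = 1) (v : SignType) :
    ∑ t, Flo v t * a t = hF v (tOf a) (sOf a) := by
  rw [signType_sum]
  rcases h1 with h1 | h1 <;> rcases h2 with h2 | h2 <;> cases v <;>
    simp [Flo, hF, sOf, tOf, h0, h1, h2] <;> norm_num

lemma key2 (s u : SignType) : ∑ t, Fup s t * Flo t u = if s = u then 1 else 0 := by
  rw [signType_sum]
  cases s <;> cases u <;> simp [Fup, Flo] <;> norm_num

/-- A deterministic one-site strategy realizing the pair `(s,t)`. -/
def detOf (s t : SignType) : SignType → ℝ := fun u =>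
  if u = 0 then 1 else if u = -1 then (t : ℝ) else if s = -1 then (t : ℝ) else -(t : ℝ)

lemma detOf_det (s t : SignType) (ht : t ≠ 0) :
    detOf s t 0 = 1 ∧ (detOf s t (-1) = -1 ∨ detOf s t (-1) = 1) ∧
      (detOf s t 1 = -1 ∨ detOf s t 1 = 1) := by
  cases s <;> cases t <;> simp_all [detOf] <;> norm_num

lemma sOf_detOf (s t : SignType) (hs : s ≠ 0) (ht : t ≠ 0) : sOf (detOf s t) = s := by
  cases s <;> cases t <;> simp_all [detOf, sOf] <;> norm_num

lemma tOf_detOf (s t : SignType) (hs : s ≠ 0) (ht : t ≠ 0) : tOf (detOf s t) = t := by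
  cases s <;> cases t <;> simp_all [detOf, tOf] <;> norm_num

/-! ### The lowering transform and the no-signaling generators -/

variable {n : ℕ}

/-- The generator `g_{s,t}` of the dual description of the no-signaling cone. -/
def gNS (s t : Fin n → SignType) : (Fin n → SignType) → ℝ :=
  fun v => ∏ j, hF (v j) (t j) (s j)

/-- The set of generators `g_{s,t}` with `s,t ∈ {±1}^n`. -/
def GenNS (n : ℕ) : Set ((Fin n → SignType) → ℝ) :=
  {g | ∃ s t : Fin n → SignType, (∀ j, s j ≠ 0) ∧ (∀ j, t j ≠ 0) ∧ g = gNS s t}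

/-- The lowering transform. -/
def Lmat (x : (Fin n → SignType) → ℝ) : (Fin n → SignType) → ℝ :=
  fun s => ∑ t, (∏ j, Flo (s j) (t j)) * x t

/-- The raising transform. -/
def Lup (x : (Fin n → SignType) → ℝ) : (Fin n → SignType) → ℝ :=
  fun s => ∑ t, (∏ j, Fup (s j) (t j)) * x t

lemma Lmat_bell (a : Fin n → SignType → ℝ) (ha : IsDet a) :
    Lmat (fun s => ∏ j, a j (s j)) = gNS (fun j => sOf (a j)) (fun j => tOf (a j)) := by
  funext s
  show ∑ t : Fin n → SignType, (∏ j, Flo (s j) (t j)) * ∏ j, a j (t j) = _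
  have h1 : ∀ t : Fin n → SignType,
      (∏ j, Flo (s j) (t j)) * ∏ j, a j (t j) = ∏ j, (Flo (s j) (t j) * a j (t j)) := by
    intro t; rw [← Finset.prod_mul_distrib]
  simp_rw [h1]
  have h2 := Finset.prod_univ_sum (fun _ : Fin n => (univ : Finset SignType))
    (fun j u => Flo (s j) u * a j u)
  rw [Fintype.piFinset_univ] at h2
  rw [← h2]
  exact Finset.prod_congr rfl fun j _ => site_key (a j) (ha j).1 (ha j).2.1 (ha j).2.2 (s j)

lemma prod_ite_eq_delta (s t : Fin n → SignType) :
    (∏ j, if s j = t j then (1:ℝ) else 0) = if s = t then 1 else 0 := by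
  by_cases h : s = t
  · simp [h]
  · obtain ⟨j, hj⟩ := Function.ne_iff.1 h
    rw [if_neg h]
    exact Finset.prod_eq_zero (Finset.mem_univ j) (if_neg hj)

lemma Lup_Lmat (x : (Fin n → SignType) → ℝ) : Lup (Lmat x) = x := by
  funext s
  show ∑ u : Fin n → SignType, (∏ j, Fup (s j) (u j)) *
    ∑ t : Fin n → SignType, (∏ j, Flo (u j) (t j)) * x t = x s
  simp_rw [Finset.mul_sum]
  rw [Finset.sum_comm]
  have h1 : ∀ t u : Fin n → SignType,
      (∏ j, Fup (s j) (u j)) * ((∏ j, Flo (u j) (t j)) * x t)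
        = (∏ j, (Fup (s j) (u j) * Flo (u j) (t j))) * x t := by
    intro t u; rw [← mul_assoc, ← Finset.prod_mul_distrib]
  simp_rw [h1, ← Finset.sum_mul]
  have h2 : ∀ t : Fin n → SignType,
      (∑ u : Fin n → SignType, ∏ j, (Fup (s j) (u j) * Flo (u j) (t j)))
        = if s = t then 1 else 0 := by
    intro t
    rw [← prod_ite_eq_delta s t]
    have h3 := Finset.prod_univ_sum (fun _ : Fin n => (univ : Finset SignType))
      (fun j u => Fup (s j) u * Flo u (t j))
    rw [Fintype.piFinset_univ] at h3
    rw [← h3]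
    exact Finset.prod_congr rfl fun j _ => key2 (s j) (t j)
  simp_rw [h2, ite_mul, one_mul, zero_mul]
  simp

lemma Lmat_inj (x y : (Fin n → SignType) → ℝ) (h : Lmat x = Lmat y) : x = y := by
  rw [← Lup_Lmat x, h, Lup_Lmat]

lemma Lmat_smul (c : ℝ) (x : (Fin n → SignType) → ℝ) : Lmat (c • x) = c • Lmat x := by
  funext s
  show ∑ t : Fin n → SignType, (∏ j, Flo (s j) (t j)) * (c * x t)
    = c * ∑ t : Fin n → SignType, (∏ j, Flo (s j) (t j)) * x t
  rw [Finset.mul_sum]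
  exact Finset.sum_congr rfl fun t _ => by ring

lemma Lmat_sum {m : ℕ} (f : Fin m → (Fin n → SignType) → ℝ) :
    Lmat (∑ i, f i) = ∑ i, Lmat (f i) := by
  funext s
  show ∑ t : Fin n → SignType, (∏ j, Flo (s j) (t j)) * (∑ i, f i) t = (∑ i, Lmat (f i)) s
  simp only [Finset.sum_apply, Finset.mul_sum]
  rw [Finset.sum_comm]
  rfl

/-! ### Properties of `GenNS` -/

lemma GenNS_finite : (GenNS n).Finite := by
  apply Set.Finite.subset
    (Set.finite_range (fun p : (Fin n → SignType) × (Fin n → SignType) => gNS p.1 p.2))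
  rintro g ⟨s, t, _, _, rfl⟩
  exact ⟨(s, t), rfl⟩

lemma GenNS_nonempty : (GenNS n).Nonempty :=
  ⟨gNS (fun _ => 1) (fun _ => 1), fun _ => 1, fun _ => 1,
    fun _ => (by decide : (1 : SignType) ≠ 0), fun _ => (by decide : (1 : SignType) ≠ 0), rfl⟩

lemma GenNS_norm : ∀ g ∈ GenNS n, g (fun _ => 0) = 1 := by
  rintro g ⟨s, t, hs, ht, rfl⟩
  show (∏ j, hF 0 (t j) (s j)) = 1
  refine Finset.prod_eq_one (fun j _ => ?_)
  have : (0 : SignType) ≠ s j := fun h => (hs j) h.symm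
  simp [hF, this]

lemma mem_NS_iff (x : (Fin n → SignType) → ℝ) :
    x ∈ NS n ↔ ∀ g ∈ GenNS n, 0 ≤ ∑ v, g v * x v := by
  constructor
  · rintro h g ⟨s, t, hs, ht, rfl⟩
    exact h s t hs ht
  · intro h s t hs ht
    exact h _ ⟨s, t, hs, ht, rfl⟩

lemma coneHull_GenNS_subset_dual : coneHull (GenNS n) ⊆ dualCone (NS n) := by
  rintro y ⟨m, c, v, hc, hv, rfl⟩ x hx
  simp only [Finset.sum_apply, Pi.smul_apply, smul_eq_mul, Finset.sum_mul]
  rw [Finset.sum_comm]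
  refine Finset.sum_nonneg (fun i _ => ?_)
  have h0 : 0 ≤ ∑ w, v i w * x w := (mem_NS_iff x).1 hx _ (hv i)
  have : ∑ w, c i * v i w * x w = c i * ∑ w, v i w * x w := by
    rw [Finset.mul_sum]; exact Finset.sum_congr rfl fun w _ => by ring
  rw [this]
  exact mul_nonneg (hc i) h0

lemma dual_subset_coneHull_GenNS : dualCone (NS n) ⊆ coneHull (GenNS n) := by
  intro y hy
  refine farkas (GenNS n) GenNS_finite GenNS_nonempty (fun _ => 0) GenNS_norm y ?_
  intro x hx
  exact hy x ((mem_NS_iff x).2 hx)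

/-- `x ∈ B_n` iff lowering all indices with `F_{st}` produces an element of `(NS_n)*`. -/
theorem statement7 (n : ℕ) (hn : 1 ≤ n) (x : (Fin n → SignType) → ℝ) :
    x ∈ Bell n ↔
      (fun s : Fin n → SignType => ∑ t : Fin n → SignType, (∏ j, Flo (s j) (t j)) * x t)
        ∈ dualCone (NS n) := by
  constructor
  · rintro ⟨m, c, v, hc, hv, rfl⟩
    show Lmat (∑ i, c i • v i) ∈ dualCone (NS n)
    apply coneHull_GenNS_subset_dual
    refine ⟨m, c, fun i => Lmat (v i), hc, ?_, ?_⟩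
    · intro i
      obtain ⟨a, ha, hva⟩ := hv i
      show Lmat (v i) ∈ GenNS n
      rw [hva, Lmat_bell a ha]
      exact ⟨_, _, fun j => sOf_ne_zero (a j), fun j => tOf_ne_zero (a j), rfl⟩
    · rw [Lmat_sum]
      congr 1
      funext i
      exact Lmat_smul (c i) (v i)
  · intro h
    have h' : Lmat x ∈ coneHull (GenNS n) := dual_subset_coneHull_GenNS h
    obtain ⟨m, c, v, hc, hv, hsum⟩ := h'
    choose s t hs ht hg using hv
    set b : Fin m → (Fin n → SignType) → ℝ :=
      fun i => fun w => ∏ j, detOf (s i j) (t i j) (w j) with hb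
    have hdet : ∀ i, IsDet (fun j => detOf (s i j) (t i j)) :=
      fun i j => detOf_det _ _ (ht i j)
    have hLb : ∀ i, Lmat (b i) = v i := by
      intro i
      rw [hb]
      rw [Lmat_bell _ (hdet i), hg i]
      have e1 : (fun j => sOf (detOf (s i j) (t i j))) = s i :=
        funext fun j => sOf_detOf _ _ (hs i j) (ht i j)
      have e2 : (fun j => tOf (detOf (s i j) (t i j))) = t i :=
        funext fun j => tOf_detOf _ _ (hs i j) (ht i j)
      rw [e1, e2]
    have hLx : Lmat x = Lmat (∑ i, c i • b i) := by
      rw [Lmat_sum]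
      rw [hsum]
      congr 1
      funext i
      rw [Lmat_smul, hLb]
    have hx := Lmat_inj _ _ hLx
    exact ⟨m, c, b, hc, fun i => ⟨_, hdet i, rfl⟩, hx⟩

end
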